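/- arXiv:0709.0597 — 7 statements merged into one kernel-verified Lean document; each statement's English description precedes it below -/
import Mathlib

section
/- Let n1, n2, n3 be positive natural numbers with n1 ≥ n2. Then 2·n1·n2·n3 − (n1+n2)·n3 − 2·(n1+n2) = 0 if and only if (n1,n2,n3) is one of the six triples (2,1,6), (2,2,2), (3,1,4), (3,3,1), (5,1,3), (6,2,1). -/
/-- Classification of positive natural number solutions of
`2·n1·n2·n3 − (n1+n2)·n3 − 2·(n1+n2) = 0` with `n1 ≥ n2`
(eigenvalue relation of the generalized Painlevé V system). -/
theorem pv_eigenvalue_classification (n1 n2 n3 : ℕ)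
    (h1 : 0 < n1) (h2 : 0 < n2) (h3 : 0 < n3) (h12 : n2 ≤ n1) :
    (2 * (n1 : ℤ) * (n2 : ℤ) * (n3 : ℤ) - ((n1 : ℤ) + (n2 : ℤ)) * (n3 : ℤ)
        - 2 * ((n1 : ℤ) + (n2 : ℤ)) = 0) ↔
      ((n1, n2, n3) = (2, 1, 6) ∨ (n1, n2, n3) = (2, 2, 2) ∨ (n1, n2, n3) = (3, 1, 4) ∨
        (n1, n2, n3) = (3, 3, 1) ∨ (n1, n2, n3) = (5, 1, 3) ∨ (n1, n2, n3) = (6, 2, 1)) := by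
  constructor
  · intro hE
    have c1 : (1 : ℤ) ≤ (n1 : ℤ) := by exact_mod_cast h1
    have c2 : (1 : ℤ) ≤ (n2 : ℤ) := by exact_mod_cast h2
    have c3 : (1 : ℤ) ≤ (n3 : ℤ) := by exact_mod_cast h3
    have c12 : (n2 : ℤ) ≤ (n1 : ℤ) := by exact_mod_cast h12
    have hb2 : n2 ≤ 3 := by
      have key : (0:ℤ) ≤ (n3 - 1) * (2 * n1 * n2 - n1 - n2) := by
        apply mul_nonneg <;> nlinarith
      have : (n2 : ℤ) ≤ 3 := by nlinarith [key, c1, c2, c12, c3, hE]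
      exact_mod_cast this
    simp only [Prod.mk.injEq]
    interval_cases n2
    · -- n2 = 1
      push_cast at hE
      have h5 : (n1 : ℤ) ≤ 5 := by
        by_contra hc
        push_neg at hc
        rcases le_or_gt (n3 : ℤ) 2 with h | h
        · nlinarith
        · nlinarith
      have h5' : n1 ≤ 5 := by exact_mod_cast h5
      interval_cases n1 <;> omega
    · -- n2 = 2
      push_cast at hE
      have h6 : (n1 : ℤ) ≤ 6 := by nlinarith
      have h6' : n1 ≤ 6 := by exact_mod_cast h6
      interval_cases n1 <;> omega
    · -- n2 = 3
      push_cast at hE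
      have h3' : (n1 : ℤ) ≤ 3 := by nlinarith
      have h3'' : n1 ≤ 3 := by exact_mod_cast h3'
      interval_cases n1 <;> omega
  · rintro (h | h | h | h | h | h) <;>
      (simp only [Prod.mk.injEq] at h; obtain ⟨rfl, rfl, rfl⟩ := h; norm_num)
end

section
/- Let t, a1, a3, a9, a10 ∈ ℂ and n1, n2, n3, n4 ∈ ℂ with t ≠ 0, t ≠ 1, a1 ≠ 0 and n1, n2, n3, n4 all nonzero. Assume: (i) t·a1 = n1·(−a10); (ii) (1−t)·a1 = n2·(−a10 − a9 − a3); (iii) t(t−1)·a1 = n3·(−a10 − t·a9 − t²·a3); (iv) n4·(2·a1 + a3) = a1. Then 1/n1 + 1/n2 + 1/n3 + 1/n4 = 2. -/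
/-- The eigenvalue relation `1/n1 + 1/n2 + 1/n3 + 1/n4 = 2` for the generalized
Painlevé VI system, derived from the eigenvalue conditions at the accessible
singular points `X = 0, 1, t, ∞`. -/
theorem pvi_eigenvalue_relation (t a1 a3 a9 a10 n1 n2 n3 n4 : ℂ)
    (ht0 : t ≠ 0) (ht1 : t ≠ 1) (ha1 : a1 ≠ 0)
    (hn1 : n1 ≠ 0) (hn2 : n2 ≠ 0) (hn3 : n3 ≠ 0) (hn4 : n4 ≠ 0)
    (e1 : t * a1 = n1 * (-a10))
    (e2 : (1 - t) * a1 = n2 * (-a10 - a9 - a3))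
    (e3 : t * (t - 1) * a1 = n3 * (-a10 - t * a9 - t ^ 2 * a3))
    (e4 : n4 * (2 * a1 + a3) = a1) :
    1 / n1 + 1 / n2 + 1 / n3 + 1 / n4 = 2 := by
  have ht1' : t - 1 ≠ 0 := sub_ne_zero.2 ht1
  have ht1'' : (1 : ℂ) - t ≠ 0 := sub_ne_zero.2 (Ne.symm ht1)
  have h1 : 1 / n1 = -a10 / (t * a1) := by
    rw [div_eq_div_iff hn1 (mul_ne_zero ht0 ha1)]; linear_combination e1
  have h2 : 1 / n2 = (-a10 - a9 - a3) / ((1 - t) * a1) := by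
    rw [div_eq_div_iff hn2 (mul_ne_zero ht1'' ha1)]; linear_combination e2
  have h3 : 1 / n3 = (-a10 - t * a9 - t ^ 2 * a3) / (t * (t - 1) * a1) := by
    rw [div_eq_div_iff hn3 (mul_ne_zero (mul_ne_zero ht0 ht1') ha1)]; linear_combination e3
  have h4 : 1 / n4 = (2 * a1 + a3) / a1 := by
    rw [div_eq_div_iff hn4 ha1]; linear_combination -e4
  have hD : (-(t ^ 2 * a1 ^ 4) + (t ^ 3 * a1 ^ 4 * 2 - t ^ 4 * a1 ^ 4)) ≠ 0 := by
    have h : (-(t ^ 2 * a1 ^ 4) + (t ^ 3 * a1 ^ 4 * 2 - t ^ 4 * a1 ^ 4))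
        = -(a1 ^ 2 * t * (t - 1)) ^ 2 := by ring
    rw [h]
    simpa using pow_ne_zero 2 (mul_ne_zero (mul_ne_zero (pow_ne_zero 2 ha1) ht0) ht1')
  rw [h1, h2, h3, h4]
  field_simp
  linear_combination
end

section
/- Let n1,n2,n3,n4,α0,α1,α2,α3,α4 ∈ ℂ with each n_i ≠ 0, 1/n1+1/n2+1/n3+1/n4 = 2, δ ≠ 0 and 2n1n2n3−n1n2−n1n3−n2n3 ≠ 0. Let U ⊆ ℂ be open with 0,1 ∉ U, and let x, y : ℂ → ℂ be differentiable on U with y(t) ≠ 0 for all t ∈ U, satisfying the generalized Painlevé VI system with parameters (n1,n2,n3,n4; α0,α1,α2,α3,α4) on U. Then the functions x̃ := x + α2/y and ỹ := y satisfy the generalized Painlevé VI system on U with parameters (n1,n2,n3,n4; α0+α2−n3α2, ((2n1n2n3−n1n2−n1n3−n2n3)α1+(n1n2n3−n1n2−n1n3−n2n3)α2)/(2n1n2n3−n1n2−n1n3−n2n3), −α2, α3+α2−n2α2, α4+α2−n1α2), provided the quantity δ formed from these new parameters is nonzero. -/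
/-- The constant `δ` of the generalized Painlevé VI system. -/
noncomputable def pviDelta (n1 n2 n3 b0 b1 b2 b3 b4 : ℂ) : ℂ :=
  n1 * n2 * b0 + (2 * n1 * n2 * n3 - n1 * n2 - n1 * n3 - n2 * n3) * b1
    - n1 * n2 * n3 * b2 + n1 * n3 * b3 + n2 * n3 * b4

/-- `x, y : ℂ → ℂ` are differentiable on `U` and satisfy the generalized
Painlevé VI system with parameters `(n1,n2,n3,n4; b0,b1,b2,b3,b4)` on `U`. -/
def PVISystem (n1 n2 n3 n4 b0 b1 b2 b3 b4 : ℂ) (U : Set ℂ) (x y : ℂ → ℂ) : Prop :=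
  DifferentiableOn ℂ x U ∧ DifferentiableOn ℂ y U ∧
  ∀ t ∈ U,
    (pviDelta n1 n2 n3 b0 b1 b2 b3 b4 * (t * (t - 1)) * deriv x t =
      n1 * n2 * n3 * x t * (x t - 1) * (t - x t) * y t
      + ((2 * n1 * n2 * n3 - n1 * n2 - n1 * n3 - n2 * n3) * b1 - n1 * n2 * n3 * b2) * (x t) ^ 2
      + (-(2 * n1 * n2 * n3 - n1 * n2 - n1 * n3 - n2 * n3) * b1 + n1 * n2 * n3 * b2
          + n1 * n3 * b3 * (t - 1) + n2 * n3 * b4 * t) * x t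
      - n2 * n3 * b4 * t)
    ∧
    (pviDelta n1 n2 n3 b0 b1 b2 b3 b4 * (t * (t - 1)) * deriv y t =
      ((n1 * n2 + n2 * n3 + n1 * n3) * (x t) ^ 2
          - (n1 * n2 + n2 * n3 + (n1 + n2) * n3 * t) * x t + n2 * n3 * t) * (y t) ^ 2
      + (-(2 * (2 * n1 * n2 * n3 - n1 * n2 - n1 * n3 - n2 * n3) * b1
            + (-2 * n1 * n2 - 2 * n1 * n3 - 2 * n2 * n3 + n1 * n2 * n3) * b2) * x t
          + (-(n1 * n2) - n1 * n3 - n2 * n3 + 2 * n1 * n2 * n3) * b1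
          + ((n1 * n2 - n1 - n2) * n3 * t - n1 * n2 - n2 * n3) * b2
          - n1 * n3 * b3 * (t - 1) - n2 * n3 * b4 * t) * y t
      - b2 * ((-(n1 * n2) - n1 * n3 - n2 * n3 + 2 * n1 * n2 * n3) * b1
          + (-(n1 * n2) - n1 * n3 - n2 * n3 + n1 * n2 * n3) * b2))

set_option maxHeartbeats 1600000 in
/-- Birational symmetry `s` of the generalized Painlevé VI system:
`(x, y) ↦ (x + α2/y, y)` with the indicated parameter change. -/
theorem pvi_symmetry_s (n1 n2 n3 n4 a0 a1 a2 a3 a4 : ℂ)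
    (hn1 : n1 ≠ 0) (hn2 : n2 ≠ 0) (hn3 : n3 ≠ 0) (hn4 : n4 ≠ 0)
    (hsum : 1 / n1 + 1 / n2 + 1 / n3 + 1 / n4 = 2)
    (hδ : pviDelta n1 n2 n3 a0 a1 a2 a3 a4 ≠ 0)
    (hC : 2 * n1 * n2 * n3 - n1 * n2 - n1 * n3 - n2 * n3 ≠ 0)
    (U : Set ℂ) (hU : IsOpen U) (h0U : (0 : ℂ) ∉ U) (h1U : (1 : ℂ) ∉ U)
    (x y : ℂ → ℂ) (hy : ∀ t ∈ U, y t ≠ 0)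
    (hxy : PVISystem n1 n2 n3 n4 a0 a1 a2 a3 a4 U x y)
    (hδ' : pviDelta n1 n2 n3 (a0 + a2 - n3 * a2)
        (((2 * n1 * n2 * n3 - n1 * n2 - n1 * n3 - n2 * n3) * a1
            + (n1 * n2 * n3 - n1 * n2 - n1 * n3 - n2 * n3) * a2)
          / (2 * n1 * n2 * n3 - n1 * n2 - n1 * n3 - n2 * n3))
        (-a2) (a3 + a2 - n2 * a2) (a4 + a2 - n1 * a2) ≠ 0) :
    PVISystem n1 n2 n3 n4 (a0 + a2 - n3 * a2)
      (((2 * n1 * n2 * n3 - n1 * n2 - n1 * n3 - n2 * n3) * a1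
          + (n1 * n2 * n3 - n1 * n2 - n1 * n3 - n2 * n3) * a2)
        / (2 * n1 * n2 * n3 - n1 * n2 - n1 * n3 - n2 * n3))
      (-a2) (a3 + a2 - n2 * a2) (a4 + a2 - n1 * a2) U
      (fun t => x t + a2 / y t) y := by
  obtain ⟨hxd, hyd, heq⟩ := hxy
  have hδeq : pviDelta n1 n2 n3 (a0 + a2 - n3 * a2)
      (((2 * n1 * n2 * n3 - n1 * n2 - n1 * n3 - n2 * n3) * a1
          + (n1 * n2 * n3 - n1 * n2 - n1 * n3 - n2 * n3) * a2)
        / (2 * n1 * n2 * n3 - n1 * n2 - n1 * n3 - n2 * n3))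
      (-a2) (a3 + a2 - n2 * a2) (a4 + a2 - n1 * a2)
      = pviDelta n1 n2 n3 a0 a1 a2 a3 a4 := by
    unfold pviDelta
    have hCi := mul_inv_cancel₀ hC
    linear_combination ((2 * n1 * n2 * n3 - n1 * n2 - n1 * n3 - n2 * n3) * a1
            + (n1 * n2 * n3 - n1 * n2 - n1 * n3 - n2 * n3) * a2) * hCi
  refine ⟨hxd.add ((differentiableOn_const a2).div hyd hy), hyd, ?_⟩
  intro t ht
  obtain ⟨E1, E2⟩ := heq t ht
  have hY : y t ≠ 0 := hy t ht
  have ht0 : t ≠ 0 := fun h => h0U (h ▸ ht)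
  have ht1 : t - 1 ≠ 0 := sub_ne_zero.mpr fun h => h1U (h ▸ ht)
  have hT : t * (t - 1) ≠ 0 := mul_ne_zero ht0 ht1
  have hδT : pviDelta n1 n2 n3 a0 a1 a2 a3 a4 * (t * (t - 1)) ≠ 0 := mul_ne_zero hδ hT
  have hx' : HasDerivAt x (deriv x t) t := (hxd.differentiableAt (hU.mem_nhds ht)).hasDerivAt
  have hy' : HasDerivAt y (deriv y t) t := (hyd.differentiableAt (hU.mem_nhds ht)).hasDerivAt
  have hdiv : HasDerivAt (fun s => a2 / y s)
      ((0 * y t - a2 * deriv y t) / (y t) ^ 2) t := (hasDerivAt_const t a2).div hy' hY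
  have hd : HasDerivAt (fun s => x s + a2 / y s)
      (deriv x t + (0 * y t - a2 * deriv y t) / (y t) ^ 2) t := hx'.add hdiv
  have hd1 : deriv x t
      = pviDelta n1 n2 n3 a0 a1 a2 a3 a4 * (t * (t - 1)) * deriv x t
        / (pviDelta n1 n2 n3 a0 a1 a2 a3 a4 * (t * (t - 1))) :=
    (mul_div_cancel_left₀ (deriv x t) hδT).symm
  have hd2 : deriv y t
      = pviDelta n1 n2 n3 a0 a1 a2 a3 a4 * (t * (t - 1)) * deriv y t
        / (pviDelta n1 n2 n3 a0 a1 a2 a3 a4 * (t * (t - 1))) :=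
    (mul_div_cancel_left₀ (deriv y t) hδT).symm
  rw [E1] at hd1
  rw [E2] at hd2
  constructor
  · rw [hδeq]
    beta_reduce
    have hstep : pviDelta n1 n2 n3 a0 a1 a2 a3 a4 * (t * (t - 1))
          * (deriv x t + (0 * y t - a2 * deriv y t) / (y t) ^ 2)
        = pviDelta n1 n2 n3 a0 a1 a2 a3 a4 * (t * (t - 1)) * deriv x t
          - a2 * (pviDelta n1 n2 n3 a0 a1 a2 a3 a4 * (t * (t - 1)) * deriv y t) / (y t) ^ 2 := by
      ring
    rw [hd.deriv, hstep, E1, E2]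
    set c := 2 * n1 * n2 * n3 - n1 * n2 - n1 * n3 - n2 * n3 with hc
    field_simp [hY, hC]
    try rw [div_sub' _ _ _ (by simp [hY, hC])]
    try rw [div_mul_eq_mul_div]
    try rw [eq_div_iff (by simp [hY, hC])]
    try rw [div_eq_iff (by simp [hY, hC])]
    rw [hc]
    ring
  · rw [hδeq]
    beta_reduce
    rw [hd2]
    set c := 2 * n1 * n2 * n3 - n1 * n2 - n1 * n3 - n2 * n3 with hc
    field_simp [hY, hC, hδ, ht0, ht1]
    try rw [eq_div_iff (by simp [hY, hC, hδ, ht0, ht1])]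
    try rw [div_eq_iff (by simp [hY, hC, hδ, ht0, ht1])]
    rw [hc]
    ring
end

section
/- Let n1,n2,n3,n4,α0,α1,α2,α3,α4 ∈ ℂ with each n_i ≠ 0, 1/n1+1/n2+1/n3+1/n4 = 2 and δ ≠ 0. Let U ⊆ ℂ be open with 0,1 ∉ U, and let x, y : ℂ → ℂ be differentiable on U satisfying the generalized Painlevé VI system with parameters (n1,n2,n3,n4; α0,α1,α2,α3,α4) on U. Then the functions x̃(t) := 1 − x(1−t) and ỹ(t) := −y(1−t) satisfy the generalized Painlevé VI system on the set {t : 1−t ∈ U} with parameters (n2,n1,n3,n4; α0,α1,α2,α4,α3), provided the quantity δ formed from these new parameters is nonzero. -/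
/-- Birational symmetry `π₁` of the generalized Painlevé VI system:
`x̃(t) = 1 − x(1−t)`, `ỹ(t) = −y(1−t)`, with parameters `(n2,n1,n3,n4; α0,α1,α2,α4,α3)`. -/
theorem pvi_symmetry_pi1 (n1 n2 n3 n4 a0 a1 a2 a3 a4 : ℂ)
    (hn1 : n1 ≠ 0) (hn2 : n2 ≠ 0) (hn3 : n3 ≠ 0) (hn4 : n4 ≠ 0)
    (hsum : 1 / n1 + 1 / n2 + 1 / n3 + 1 / n4 = 2)
    (hδ : pviDelta n1 n2 n3 a0 a1 a2 a3 a4 ≠ 0)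
    (U : Set ℂ) (hU : IsOpen U) (h0U : (0 : ℂ) ∉ U) (h1U : (1 : ℂ) ∉ U)
    (x y : ℂ → ℂ)
    (hxy : PVISystem n1 n2 n3 n4 a0 a1 a2 a3 a4 U x y)
    (hδ' : pviDelta n2 n1 n3 a0 a1 a2 a4 a3 ≠ 0) :
    PVISystem n2 n1 n3 n4 a0 a1 a2 a4 a3 {t : ℂ | 1 - t ∈ U}
      (fun t => 1 - x (1 - t)) (fun t => -y (1 - t)) := by
  obtain ⟨hx, hy, heq⟩ := hxy
  have hxat : ∀ t : ℂ, 1 - t ∈ U → DifferentiableAt ℂ x (1 - t) := fun t ht =>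
    (hx (1 - t) ht).differentiableAt (hU.mem_nhds ht)
  have hyat : ∀ t : ℂ, 1 - t ∈ U → DifferentiableAt ℂ y (1 - t) := fun t ht =>
    (hy (1 - t) ht).differentiableAt (hU.mem_nhds ht)
  have hinner : ∀ t : ℂ, HasDerivAt (fun s : ℂ => 1 - s) (-1) t := by
    intro t
    simpa using (hasDerivAt_id t).const_sub 1
  have hdx : ∀ t : ℂ, 1 - t ∈ U →
      HasDerivAt (fun s => 1 - x (1 - s)) (deriv x (1 - t)) t := by
    intro t ht
    have h1 : HasDerivAt (fun s => x (1 - s)) (deriv x (1 - t) * (-1)) t :=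
      ((hxat t ht).hasDerivAt).comp t (hinner t)
    simpa using h1.const_sub 1
  have hdy : ∀ t : ℂ, 1 - t ∈ U →
      HasDerivAt (fun s => -y (1 - s)) (deriv y (1 - t)) t := by
    intro t ht
    have h1 : HasDerivAt (fun s => y (1 - s)) (deriv y (1 - t) * (-1)) t :=
      ((hyat t ht).hasDerivAt).comp t (hinner t)
    simpa using h1.fun_neg
  refine ⟨fun t ht => ((hdx t ht).differentiableAt).differentiableWithinAt,
          fun t ht => ((hdy t ht).differentiableAt).differentiableWithinAt, ?_⟩
  intro t ht
  have ht' : 1 - t ∈ U := ht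
  obtain ⟨h1, h2⟩ := heq (1 - t) ht'
  rw [(hdx t ht).deriv, (hdy t ht).deriv] at *
  simp only [pviDelta] at h1 h2 ⊢
  constructor
  · linear_combination h1
  · linear_combination h2
end

section
/- Let n1,n2,n3,n4,α0,α1,α2,α3,α4 ∈ ℂ with each n_i ≠ 0, 1/n1+1/n2+1/n3+1/n4 = 2 and δ ≠ 0. Let U ⊆ ℂ be open with 0,1 ∉ U, and let x, y : ℂ → ℂ be differentiable on U satisfying the generalized Painlevé VI system with parameters (n1,n2,n3,n4; α0,α1,α2,α3,α4) on U. Then the functions x̃(t) := (T − x(T))/(T−1) and ỹ(t) := −(T−1)·y(T), where T := t/(t−1), satisfy the generalized Painlevé VI system on the set {t : t ≠ 1 and t/(t−1) ∈ U} with parameters (n3,n2,n1,n4; α4,α1,α2,α3,α0), provided the quantity δ formed from these new parameters is nonzero. -/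
set_option maxHeartbeats 4000000 in
/-- Birational symmetry `π₂` of the generalized Painlevé VI system:
with `T = t/(t−1)`, `x̃(t) = (T − x(T))/(T−1)`, `ỹ(t) = −(T−1)·y(T)`,
with parameters `(n3,n2,n1,n4; α4,α1,α2,α3,α0)`. -/
theorem pvi_symmetry_pi2 (n1 n2 n3 n4 a0 a1 a2 a3 a4 : ℂ)
    (hn1 : n1 ≠ 0) (hn2 : n2 ≠ 0) (hn3 : n3 ≠ 0) (hn4 : n4 ≠ 0)
    (hsum : 1 / n1 + 1 / n2 + 1 / n3 + 1 / n4 = 2)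
    (hδ : pviDelta n1 n2 n3 a0 a1 a2 a3 a4 ≠ 0)
    (U : Set ℂ) (hU : IsOpen U) (h0U : (0 : ℂ) ∉ U) (h1U : (1 : ℂ) ∉ U)
    (x y : ℂ → ℂ)
    (hxy : PVISystem n1 n2 n3 n4 a0 a1 a2 a3 a4 U x y)
    (hδ' : pviDelta n3 n2 n1 a4 a1 a2 a3 a0 ≠ 0) :
    PVISystem n3 n2 n1 n4 a4 a1 a2 a3 a0 {t : ℂ | t ≠ 1 ∧ t / (t - 1) ∈ U}
      (fun t => (t / (t - 1) - x (t / (t - 1))) / (t / (t - 1) - 1))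
      (fun t => -(t / (t - 1) - 1) * y (t / (t - 1))) := by
  obtain ⟨hxd, hyd, heq⟩ := hxy
  have key : ∀ t : ℂ, t ≠ 1 → t / (t - 1) ∈ U →
      HasDerivAt (fun τ : ℂ => (τ / (τ - 1) - x (τ / (τ - 1))) / (τ / (τ - 1) - 1))
        (1 - x (t / (t - 1)) + deriv x (t / (t - 1)) * (t - 1)⁻¹) t ∧
      HasDerivAt (fun τ : ℂ => -(τ / (τ - 1) - 1) * y (τ / (τ - 1)))
        (deriv y (t / (t - 1)) * ((t - 1) ^ 3)⁻¹ + y (t / (t - 1)) * ((t - 1) ^ 2)⁻¹) t := by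
    intro t ht1 hsU
    have hu : t - 1 ≠ 0 := sub_ne_zero.mpr ht1
    have hT : HasDerivAt (fun τ : ℂ => τ / (τ - 1))
        ((1 * (t - 1) - t * 1) / (t - 1) ^ 2) t :=
      (hasDerivAt_id t).div ((hasDerivAt_id t).sub_const 1) hu
    have hxa : DifferentiableAt ℂ x (t / (t - 1)) :=
      (hxd _ hsU).differentiableAt (hU.mem_nhds hsU)
    have hya : DifferentiableAt ℂ y (t / (t - 1)) :=
      (hyd _ hsU).differentiableAt (hU.mem_nhds hsU)
    have hXT : HasDerivAt (fun τ : ℂ => x (τ / (τ - 1)))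
        (deriv x (t / (t - 1)) * ((1 * (t - 1) - t * 1) / (t - 1) ^ 2)) t :=
      hxa.hasDerivAt.comp t hT
    have hYT : HasDerivAt (fun τ : ℂ => y (τ / (τ - 1)))
        (deriv y (t / (t - 1)) * ((1 * (t - 1) - t * 1) / (t - 1) ^ 2)) t :=
      hya.hasDerivAt.comp t hT
    have hne : t / (t - 1) - 1 ≠ 0 := by
      rw [div_sub_one hu]
      simp [hu]
    constructor
    · have h := (hT.sub hXT).div ((hT.sub_const 1)) hne
      refine h.congr_deriv ?_
      simp only [Pi.sub_apply, Pi.neg_apply]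
      rw [div_sub_one hu]
      field_simp
      ring
    · have h := ((hT.sub_const 1).neg).mul hYT
      refine h.congr_deriv ?_
      simp only [Pi.sub_apply, Pi.neg_apply]
      rw [div_sub_one hu]
      field_simp
      ring
  refine ⟨?_, ?_, ?_⟩
  · exact fun t ht => ((key t ht.1 ht.2).1).differentiableAt.differentiableWithinAt
  · exact fun t ht => ((key t ht.1 ht.2).2).differentiableAt.differentiableWithinAt
  · intro t ht
    obtain ⟨ht1, hsU⟩ := ht
    have hu : t - 1 ≠ 0 := sub_ne_zero.mpr ht1
    obtain ⟨k1, k2⟩ := key t ht1 hsU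
    have hx1 := (heq _ hsU).1
    have hy1 := (heq _ hsU).2
    simp only [pviDelta] at hx1 hy1 ⊢
    constructor
    · rw [k1.deriv]
      linear_combination (norm := (field_simp; ring1)) (t - 1) ^ 2 * hx1
    · rw [k2.deriv]
      linear_combination (norm := (field_simp; ring1)) hy1
end

section
/- Let t0, α4, C1, C2 ∈ ℂ with t0 ≠ 1, and let U ⊆ ℂ be open such that T + (t0−1)·C1 ≠ 0 for all T ∈ U. Define W(T) := T/(t0−1) + C1 and Z(T) := C2·(T+(t0−1)·C1)² + α4·(T+(t0−1)·C1)/(t0−1). Then W(T) ≠ 0 on U, and (Z, W) satisfies on U the reduced system dZ/dT = (1/W)·((2/(t0−1))·Z − (α4/(t0−1))·W) and dW/dT = (1/W)·((1/(t0−1))·W). -/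
/-- The explicit single-valued solution of the reduced constant-coefficient system
obtained from the Painlevé VI system at the accessible singular point `X = 0`:
`W(T) = T/(t0−1) + C1`, `Z(T) = C2·(T+(t0−1)C1)² + α4·(T+(t0−1)C1)/(t0−1)` satisfy
`dZ/dT = (1/W)·((2/(t0−1))·Z − (α4/(t0−1))·W)` and `dW/dT = (1/W)·((1/(t0−1))·W)`. -/
theorem pvi_reduced_system_solution (t0 α4 C1 C2 : ℂ) (ht0 : t0 ≠ 1)
    (U : Set ℂ) (hU : IsOpen U)
    (h : ∀ T ∈ U, T + (t0 - 1) * C1 ≠ 0) :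
    (∀ T ∈ U, T / (t0 - 1) + C1 ≠ 0) ∧
    ∀ T ∈ U,
      (HasDerivAt
        (fun T : ℂ => C2 * (T + (t0 - 1) * C1) ^ 2 + α4 * (T + (t0 - 1) * C1) / (t0 - 1))
        ((1 / (T / (t0 - 1) + C1)) *
          ((2 / (t0 - 1)) *
              (C2 * (T + (t0 - 1) * C1) ^ 2 + α4 * (T + (t0 - 1) * C1) / (t0 - 1))
            - (α4 / (t0 - 1)) * (T / (t0 - 1) + C1))) T)
      ∧
      (HasDerivAt (fun T : ℂ => T / (t0 - 1) + C1)
        ((1 / (T / (t0 - 1) + C1)) * ((1 / (t0 - 1)) * (T / (t0 - 1) + C1))) T) := by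
  have ht : t0 - 1 ≠ 0 := sub_ne_zero.mpr ht0
  have hW : ∀ T ∈ U, T / (t0 - 1) + C1 ≠ 0 := by
    intro T hT
    have hA := h T hT
    intro hc
    apply hA
    have : T + C1 * (t0 - 1) = 0 := by
      field_simp at hc
      linear_combination hc
    linear_combination this
  refine ⟨hW, fun T hT => ?_⟩
  have hWT := hW T hT
  have hAT := h T hT
  constructor
  · have h1 : HasDerivAt (fun T : ℂ => C2 * (T + (t0 - 1) * C1) ^ 2 +
        α4 * (T + (t0 - 1) * C1) / (t0 - 1))
        (C2 * (2 * (T + (t0 - 1) * C1)) + α4 / (t0 - 1)) T := by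
      have hid : HasDerivAt (fun T : ℂ => T + (t0 - 1) * C1) 1 T :=
        (hasDerivAt_id T).add_const _
      have := ((hid.pow 2).const_mul C2).add (((hid.const_mul α4).div_const (t0 - 1)))
      exact this.congr_deriv (by norm_num)
    have hAT' : T + C1 * (t0 - 1) ≠ 0 := fun hc => hAT (by linear_combination hc)
    convert h1 using 1
    field_simp
    ring
  · have h2 : HasDerivAt (fun T : ℂ => T / (t0 - 1) + C1) (1 / (t0 - 1)) T := by
      have := ((hasDerivAt_id T).div_const (t0 - 1)).add_const C1
      simpa [one_div] using this
    have hAT' : T + C1 * (t0 - 1) ≠ 0 := fun hc => hAT (by linear_combination hc)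
    convert h2 using 1
    field_simp
end

section
/- Let α2, a1,...,a10 ∈ ℂ, let U ⊆ ℂ be open, and let x, y : ℂ → ℂ be differentiable on U with x(t) ≠ 0 for t ∈ U, satisfying on U: dx/dt = a1x³y + a2x²y + (1/2)((3a1+2a3)α2−a4)x² + a5xy + ((a2+a9)α2−a6)x + a7y + a8 and dy/dt = a3x²y² + a9xy² + a10y² + a4xy + a6y + (1/2)(a1α2+a4)α2. Then the functions x1 := 1/x and y1 := −(x·y+α2)·x are differentiable on U and satisfy: dx1/dt = a7x1⁴y1 + a5x1³y1 + a2x1²y1 + a1x1y1 + α2a7x1³ + (α2a5−a8)x1² + (a6−α2a9)x1 − (1/2)α2(a1+2a3) + a4/2, and dy1/dt = −2a7x1³y1² − (2a5+a10)x1²y1² − 3α2a7x1²y1 − (2a2+a9)x1y1² − (2a1+a3)y1² − (α2(3a5+2a10)−2a8)x1y1 − α2²a7x1 − (α2a2+a6)y1 − α2(α2(a5+a10)−a8). -/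
/-- Rewriting the general ten-parameter polynomial system on `Σ₂` in the second
coordinate chart `(x1, y1) = (1/x, −(xy+α2)x)` of the Hirzebruch surface: the
transformed functions are differentiable and satisfy the polynomial system (3.4). -/
theorem sigma2_system_in_second_chart (α2 a1 a2 a3 a4 a5 a6 a7 a8 a9 a10 : ℂ)
    (U : Set ℂ) (hU : IsOpen U)
    (x y : ℂ → ℂ) (hx : DifferentiableOn ℂ x U) (hy : DifferentiableOn ℂ y U)
    (hx0 : ∀ t ∈ U, x t ≠ 0)
    (heq : ∀ t ∈ U,
      (deriv x t = a1 * (x t) ^ 3 * y t + a2 * (x t) ^ 2 * y t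
        + (1 / 2) * ((3 * a1 + 2 * a3) * α2 - a4) * (x t) ^ 2 + a5 * x t * y t
        + ((a2 + a9) * α2 - a6) * x t + a7 * y t + a8)
      ∧
      (deriv y t = a3 * (x t) ^ 2 * (y t) ^ 2 + a9 * x t * (y t) ^ 2
        + a10 * (y t) ^ 2 + a4 * x t * y t + a6 * y t
        + (1 / 2) * (a1 * α2 + a4) * α2)) :
    DifferentiableOn ℂ (fun t => 1 / x t) U ∧
    DifferentiableOn ℂ (fun t => -(x t * y t + α2) * x t) U ∧
    ∀ t ∈ U,
      (deriv (fun t => 1 / x t) t =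
        a7 * (1 / x t) ^ 4 * (-(x t * y t + α2) * x t)
        + a5 * (1 / x t) ^ 3 * (-(x t * y t + α2) * x t)
        + a2 * (1 / x t) ^ 2 * (-(x t * y t + α2) * x t)
        + a1 * (1 / x t) * (-(x t * y t + α2) * x t)
        + α2 * a7 * (1 / x t) ^ 3
        + (α2 * a5 - a8) * (1 / x t) ^ 2
        + (a6 - α2 * a9) * (1 / x t)
        - (1 / 2) * α2 * (a1 + 2 * a3) + a4 / 2)
      ∧
      (deriv (fun t => -(x t * y t + α2) * x t) t =
        -(2 * a7) * (1 / x t) ^ 3 * (-(x t * y t + α2) * x t) ^ 2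
        - (2 * a5 + a10) * (1 / x t) ^ 2 * (-(x t * y t + α2) * x t) ^ 2
        - 3 * α2 * a7 * (1 / x t) ^ 2 * (-(x t * y t + α2) * x t)
        - (2 * a2 + a9) * (1 / x t) * (-(x t * y t + α2) * x t) ^ 2
        - (2 * a1 + a3) * (-(x t * y t + α2) * x t) ^ 2
        - (α2 * (3 * a5 + 2 * a10) - 2 * a8) * (1 / x t) * (-(x t * y t + α2) * x t)
        - α2 ^ 2 * a7 * (1 / x t)
        - (α2 * a2 + a6) * (-(x t * y t + α2) * x t)
        - α2 * (α2 * (a5 + a10) - a8)) := by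
  have hxA : ∀ t ∈ U, DifferentiableAt ℂ x t := fun t ht => hx.differentiableAt (hU.mem_nhds ht)
  have hyA : ∀ t ∈ U, DifferentiableAt ℂ y t := fun t ht => hy.differentiableAt (hU.mem_nhds ht)
  have hd1 : DifferentiableOn ℂ (fun t => 1 / x t) U := fun t ht =>
    ((differentiableAt_const 1).div (hxA t ht) (hx0 t ht)).differentiableWithinAt
  have hd2 : DifferentiableOn ℂ (fun t => -(x t * y t + α2) * x t) U := fun t ht =>
    (((((hxA t ht).mul (hyA t ht)).add_const α2).neg).mul (hxA t ht)).differentiableWithinAt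
  refine ⟨hd1, hd2, fun t ht => ?_⟩
  obtain ⟨h1, h2⟩ := heq t ht
  have Hx : HasDerivAt x (deriv x t) t := (hxA t ht).hasDerivAt
  have Hy : HasDerivAt y (deriv y t) t := (hyA t ht).hasDerivAt
  have H1 : HasDerivAt (fun t => 1 / x t)
      ((0 * x t - 1 * deriv x t) / x t ^ 2) t :=
    (hasDerivAt_const t (1 : ℂ)).div Hx (hx0 t ht)
  have H2 : HasDerivAt (fun t => -(x t * y t + α2) * x t)
      (-(deriv x t * y t + x t * deriv y t) * x t + -(x t * y t + α2) * deriv x t) t :=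
    (((Hx.mul Hy).add_const α2).neg).mul Hx
  have hxne := hx0 t ht
  have hZ : x t * (x t)⁻¹ = 1 := mul_inv_cancel₀ hxne
  constructor
  · rw [H1.deriv, h1]
    simp only [one_div, div_eq_mul_inv, ← inv_pow]
    linear_combination ((1/2) * a4 + (-1) * α2 * a3 + (-1/2) * α2 * a1 + ((x t)⁻¹) * a6 + (-1) * ((x t)⁻¹) * α2 * a9 + ((x t)⁻¹) ^ 2 * α2 * a5 + ((x t)⁻¹) ^ 3 * α2 * a7 + (y t) * ((x t)⁻¹) ^ 2 * a7 + (1/2) * (x t) * ((x t)⁻¹) * a4 + (-1) * (x t) * ((x t)⁻¹) * α2 * a3 + (-3/2) * (x t) * ((x t)⁻¹) * α2 * a1 + (x t) * (y t) * ((x t)⁻¹) ^ 2 * a5 + (x t) * (y t) * ((x t)⁻¹) ^ 3 * a7 + (-1) * (x t) ^ 2 * (y t) * ((x t)⁻¹) * a1) * hZ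
  · rw [H2.deriv, h1, h2]
    simp only [one_div, div_eq_mul_inv, ← inv_pow]
    linear_combination (2 * α2 * a8 + (-1) * α2 ^ 2 * a10 + (-1) * α2 ^ 2 * a5 + (-1) * ((x t)⁻¹) * α2 ^ 2 * a7 + (y t) * α2 * a7 + (x t) * α2 ^ 2 * a9 + 2 * (x t) * α2 ^ 2 * a2 + (x t) * ((x t)⁻¹) * α2 ^ 2 * a10 + 2 * (x t) * ((x t)⁻¹) * α2 ^ 2 * a5 + 2 * (x t) * ((x t)⁻¹) ^ 2 * α2 ^ 2 * a7 + 2 * (x t) * (y t) * a8 + (x t) * (y t) * α2 * a5 + (x t) * (y t) * ((x t)⁻¹) * α2 * a7 + 2 * (x t) * (y t) ^ 2 * a7 + 2 * (x t) ^ 2 * (y t) * α2 * a9 + 4 * (x t) ^ 2 * (y t) * α2 * a2 + 2 * (x t) ^ 2 * (y t) * ((x t)⁻¹) * α2 * a10 + 4 * (x t) ^ 2 * (y t) * ((x t)⁻¹) * α2 * a5 + 4 * (x t) ^ 2 * (y t) * ((x t)⁻¹) ^ 2 * α2 * a7 + (x t) ^ 2 * (y t) ^ 2 * a10 + 2 *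 (x t) ^ 2 * (y t) ^ 2 * a5 + 2 * (x t) ^ 2 * (y t) ^ 2 * ((x t)⁻¹) * a7 + (x t) ^ 3 * (y t) ^ 2 * a9 + 2 * (x t) ^ 3 * (y t) ^ 2 * a2 + (x t) ^ 3 * (y t) ^ 2 * ((x t)⁻¹) * a10 + 2 * (x t) ^ 3 * (y t) ^ 2 * ((x t)⁻¹) * a5 + 2 * (x t) ^ 3 * (y t) ^ 2 * ((x t)⁻¹) ^ 2 * a7) * hZ
end
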